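/- If the feature matrix Φ ∈ ℝ^{n×K} has full column rank and A ∈ ℝ^{n×n} satisfies xᵀAx < 0 for all nonzero x ∈ ℝ^n, then the linear system ΦᵀA Φ ω + Φᵀ b = 0 has a unique solution ω ∈ ℝ^K for any b ∈ ℝ^n. In particular, the projected Bellman fixed-point equation Φᵀ D_π [R + (γP^π − I)Φω] = 0 with A = D_π(γP^π − I) has a unique solution ω_π. -/

import Mathlib

open Matrix

/-- if `Φ` has full column rank and `xᵀAx < 0` for all nonzero `x`, then
`Φᵀ A Φ ω + Φᵀ b = 0` has a unique solution `ω` for any `b`; in particular the projected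
Bellman fixed-point equation `Φᵀ D_π [R + (γP^π − I)Φω] = 0`, i.e. with
`A = D_π (γP^π − I)`, has a unique solution. -/
theorem stmt14 {n K : ℕ} (Φ : Matrix (Fin n) (Fin K) ℝ)
    (hΦ : Function.Injective Φ.mulVec)
    (A : Matrix (Fin n) (Fin n) ℝ)
    (hA : ∀ x : Fin n → ℝ, x ≠ 0 → x ⬝ᵥ (A *ᵥ x) < 0) :
    (∀ b : Fin n → ℝ, ∃! ω : Fin K → ℝ, (Φᵀ * A * Φ) *ᵥ ω + Φᵀ *ᵥ b = 0) ∧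
      (∀ (P : Matrix (Fin n) (Fin n) ℝ) (γ : ℝ) (d R : Fin n → ℝ),
        A = Matrix.diagonal d * (γ • P - 1) →
        ∃! ω : Fin K → ℝ,
          Φᵀ *ᵥ (Matrix.diagonal d *ᵥ (R + (γ • P - 1) *ᵥ (Φ *ᵥ ω))) = 0) := by
  set M := Φᵀ * A * Φ with hM
  -- the linear map given by M
  have hker : ∀ ω : Fin K → ℝ, M *ᵥ ω = 0 → ω = 0 := by
    intro ω h
    by_contra hω
    have hΦω : Φ *ᵥ ω ≠ 0 := fun h0 => hω (hΦ (by simpa using h0))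
    have hneg := hA (Φ *ᵥ ω) hΦω
    have : ω ⬝ᵥ (M *ᵥ ω) = (Φ *ᵥ ω) ⬝ᵥ (A *ᵥ (Φ *ᵥ ω)) := by
      rw [hM, ← Matrix.mulVec_mulVec, ← Matrix.mulVec_mulVec,
        Matrix.dotProduct_mulVec, Matrix.vecMul_transpose]
    rw [h, dotProduct_zero] at this
    linarith [this ▸ hneg]
  have hinj : Function.Injective M.mulVec := by
    have : Function.Injective M.mulVecLin := by
      rw [← LinearMap.ker_eq_bot, LinearMap.ker_eq_bot']
      intro ω h
      exact hker ω h
    simpa [Matrix.coe_mulVecLin] using this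
  have hsurj : Function.Surjective M.mulVec := by
    have : Function.Surjective M.mulVecLin :=
      (LinearMap.injective_iff_surjective (f := M.mulVecLin)).mp
        (by simpa [Matrix.coe_mulVecLin] using hinj)
    simpa [Matrix.coe_mulVecLin] using this
  have main : ∀ b : Fin n → ℝ, ∃! ω : Fin K → ℝ, M *ᵥ ω + Φᵀ *ᵥ b = 0 := by
    intro b
    obtain ⟨ω, hω⟩ := hsurj (-(Φᵀ *ᵥ b))
    refine ⟨ω, ?_, ?_⟩
    · show M *ᵥ ω + Φᵀ *ᵥ b = 0
      rw [hω]; simp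
    · intro ω' hω'
      have h' : M *ᵥ ω' = -(Φᵀ *ᵥ b) := by
        rwa [add_eq_zero_iff_eq_neg] at hω'
      exact hinj (by rw [hω, h'])
  refine ⟨main, ?_⟩
  intro P γ d R hAeq
  have key : ∀ ω : Fin K → ℝ,
      Φᵀ *ᵥ (Matrix.diagonal d *ᵥ (R + (γ • P - 1) *ᵥ (Φ *ᵥ ω)))
        = M *ᵥ ω + Φᵀ *ᵥ (Matrix.diagonal d *ᵥ R) := by
    intro ω
    rw [hM, hAeq]
    simp only [Matrix.mulVec_add, Matrix.mulVec_mulVec, Matrix.mul_assoc]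
    exact add_comm _ _
  obtain ⟨ω, hω, hu⟩ := main (Matrix.diagonal d *ᵥ R)
  refine ⟨ω, ?_, fun ω' h => hu ω' ?_⟩
  · show Φᵀ *ᵥ (Matrix.diagonal d *ᵥ (R + (γ • P - 1) *ᵥ (Φ *ᵥ ω))) = 0
    rw [key]; exact hω
  · show M *ᵥ ω' + Φᵀ *ᵥ (Matrix.diagonal d *ᵥ R) = 0
    rw [← key]; exact h
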